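/- Let A ∈ ℝ^{m×n}, B ∈ ℝ^{m×l}, and λ, τ, σ > 0. If λτ‖AᵀA‖ + λσ‖BᵀB‖ < 1 (where ‖·‖ is the spectral norm), then the block matrix P with blocks P₁₁ = (1/τ)I_n − λAᵀA, P₁₂ = −λAᵀB, P₂₁ = −λBᵀA, P₂₂ = (1/σ)I_l − λBᵀB is positive definite. -/

import Mathlib

open Matrix
open scoped Matrix.Norms.L2Operator

lemma dp_self_nonneg {k : ℕ} (u : Fin k → ℝ) : 0 ≤ u ⬝ᵥ u :=
  Finset.sum_nonneg fun _ _ => mul_self_nonneg _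

lemma dot_tr {m k : ℕ} (M : Matrix (Fin m) (Fin k) ℝ) (x : Fin k → ℝ) (u : Fin m → ℝ) :
    x ⬝ᵥ (Mᵀ *ᵥ u) = (M *ᵥ x) ⬝ᵥ u := by
  rw [dotProduct_mulVec, vecMul_transpose]

lemma quad_le {m k : ℕ} (M : Matrix (Fin m) (Fin k) ℝ) (x : Fin k → ℝ) :
    (M *ᵥ x) ⬝ᵥ (M *ᵥ x) ≤ ‖Mᵀ * M‖ * (x ⬝ᵥ x) := by
  have h1 : (M *ᵥ x) ⬝ᵥ (M *ᵥ x)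
      = ‖(WithLp.equiv 2 (Fin m → ℝ)).symm (M *ᵥ x)‖ ^ 2 := by
    rw [← real_inner_self_eq_norm_sq, WithLp.equiv_symm_apply, EuclideanSpace.inner_toLp_toLp, star_trivial]
  have h3 : x ⬝ᵥ x = ‖(WithLp.equiv 2 (Fin k → ℝ)).symm x‖ ^ 2 := by
    rw [← real_inner_self_eq_norm_sq, WithLp.equiv_symm_apply, EuclideanSpace.inner_toLp_toLp, star_trivial]
  have h2 := M.l2_opNorm_mulVec ((WithLp.equiv 2 (Fin k → ℝ)).symm x)
  have hM : ‖Mᵀ * M‖ = ‖M‖ * ‖M‖ := by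
    rw [← M.conjTranspose_eq_transpose_of_trivial, M.l2_opNorm_conjTranspose_mul_self]
  rw [h1, h3, hM]
  calc ‖(WithLp.equiv 2 (Fin m → ℝ)).symm (M *ᵥ x)‖ ^ 2
      ≤ (‖M‖ * ‖(WithLp.equiv 2 (Fin k → ℝ)).symm x‖) ^ 2 :=
        pow_le_pow_left₀ (norm_nonneg _) h2 2
    _ = ‖M‖ * ‖M‖ * ‖(WithLp.equiv 2 (Fin k → ℝ)).symm x‖ ^ 2 := by ring

lemma cross_bound {k : ℕ} (u w : Fin k → ℝ) (p q : ℝ) :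
    2 * (p * q) * (u ⬝ᵥ w) ≤ q ^ 2 * (u ⬝ᵥ u) + p ^ 2 * (w ⬝ᵥ w) := by
  have h := dp_self_nonneg (q • u - p • w)
  simp only [dotProduct_sub, sub_dotProduct, smul_dotProduct, dotProduct_smul,
    smul_eq_mul] at h
  rw [dotProduct_comm w u] at h
  nlinarith [h]

set_option maxHeartbeats 1000000 in
lemma arith_key (lam tau sigma NA NB X Y a2 b2 c : ℝ)
    (hlam : 0 < lam) (htau : 0 < tau) (hsigma : 0 < sigma)
    (hNA0 : 0 ≤ NA) (hNB0 : 0 ≤ NB)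
    (hcond : lam * tau * NA + lam * sigma * NB < 1)
    (hX0 : 0 ≤ X) (hY0 : 0 ≤ Y)
    (ha2X : a2 ≤ NA * X) (hb2Y : b2 ≤ NB * Y)
    (hcr : ∀ p q : ℝ, 2 * (p * q) * c ≤ q ^ 2 * a2 + p ^ 2 * b2)
    (hQ : 0 < (1/tau) * X + (1/sigma) * Y) :
    0 < (1/tau) * X + (1/sigma) * Y - lam * (a2 + 2 * c + b2) := by
  set L := lam * tau * NA + lam * sigma * NB with hL
  have hL0 : 0 ≤ L := by positivity
  set δ := (1 - L) / (2 * lam * (tau + sigma)) with hδ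
  have hδ0 : 0 < δ := div_pos (by linarith) (by positivity)
  set p := tau * (NA + δ) with hp
  set q := sigma * (NB + δ) with hq
  have hp0 : 0 < p := by positivity
  have hq0 : 0 < q := by positivity
  set K := lam * (p + q) with hK
  have hK1 : K < 1 := by
    have hKe : K = L + lam * (tau + sigma) * δ := by rw [hK, hp, hq, hL]; ring
    have h2 : lam * (tau + sigma) * δ = (1 - L) / 2 := by
      rw [hδ]; field_simp
    rw [hKe, h2]; linarith
  have hK0 : 0 < K := by positivity
  have hcrpq := hcr p q
  have h2c : 2 * c ≤ (q/p) * a2 + (p/q) * b2 := by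
    rw [div_mul_eq_mul_div, div_mul_eq_mul_div, div_add_div _ _ (ne_of_gt hp0) (ne_of_gt hq0),
      le_div_iff₀ (by positivity)]
    nlinarith [hcrpq]
  have hqp0 : 0 ≤ 1 + q/p := by positivity
  have hpq0 : 0 ≤ 1 + p/q := by positivity
  have hA' : a2 ≤ (NA + δ) * X := le_trans ha2X (by nlinarith)
  have hB' : b2 ≤ (NB + δ) * Y := le_trans hb2Y (by nlinarith)
  have step1 : lam * (a2 + 2 * c + b2) ≤ lam * ((1 + q/p) * a2 + (1 + p/q) * b2) := by
    have := mul_le_mul_of_nonneg_left h2c (le_of_lt hlam)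
    nlinarith
  have step2 : lam * ((1 + q/p) * a2 + (1 + p/q) * b2)
      ≤ lam * ((1 + q/p) * ((NA + δ) * X) + (1 + p/q) * ((NB + δ) * Y)) := by
    apply mul_le_mul_of_nonneg_left _ (le_of_lt hlam)
    exact add_le_add (mul_le_mul_of_nonneg_left hA' hqp0) (mul_le_mul_of_nonneg_left hB' hpq0)
  have key1 : lam * (1 + q/p) * (NA + δ) = K / tau := by
    rw [hK, hp, hq]; field_simp
  have key2 : lam * (1 + p/q) * (NB + δ) = K / sigma := by
    rw [hK, hp, hq]; field_simp; ring
  have step3 : lam * ((1 + q/p) * ((NA + δ) * X) + (1 + p/q) * ((NB + δ) * Y))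
      = K * ((1/tau) * X + (1/sigma) * Y) := by
    have e1 : lam * ((1 + q/p) * ((NA + δ) * X)) = (K / tau) * X := by rw [← key1]; ring
    have e2 : lam * ((1 + p/q) * ((NB + δ) * Y)) = (K / sigma) * Y := by rw [← key2]; ring
    calc lam * ((1 + q/p) * ((NA + δ) * X) + (1 + p/q) * ((NB + δ) * Y))
        = lam * ((1 + q/p) * ((NA + δ) * X)) + lam * ((1 + p/q) * ((NB + δ) * Y)) := by ring
      _ = (K / tau) * X + (K / sigma) * Y := by rw [e1, e2]
      _ = K * ((1/tau) * X + (1/sigma) * Y) := by ring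
  nlinarith [le_trans step1 step2, le_of_eq step3, hQ, hK1]

/-- if `λτ‖AᵀA‖ + λσ‖BᵀB‖ < 1` then the block matrix
`[(1/τ)I − λAᵀA, −λAᵀB; −λBᵀA, (1/σ)I − λBᵀB]` is positive definite. -/
theorem block_P_posDef (m n l : ℕ) (A : Matrix (Fin m) (Fin n) ℝ) (B : Matrix (Fin m) (Fin l) ℝ)
    (lam tau sigma : ℝ) (hlam : 0 < lam) (htau : 0 < tau) (hsigma : 0 < sigma)
    (hcond : lam * tau * ‖Aᵀ * A‖ + lam * sigma * ‖Bᵀ * B‖ < 1) :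
    (Matrix.fromBlocks
      ((1 / tau) • (1 : Matrix (Fin n) (Fin n) ℝ) - lam • (Aᵀ * A))
      (-(lam • (Aᵀ * B)))
      (-(lam • (Bᵀ * A)))
      ((1 / sigma) • (1 : Matrix (Fin l) (Fin l) ℝ) - lam • (Bᵀ * B))).PosDef := by
  rw [posDef_iff_dotProduct_mulVec]
  constructor
  · show _ = _
    rw [fromBlocks_conjTranspose]
    simp only [conjTranspose_eq_transpose_of_trivial, transpose_sub, transpose_smul,
      transpose_one, transpose_mul, transpose_transpose, transpose_neg]
  · intro v hv
    set x : Fin n → ℝ := fun i => v (Sum.inl i) with hx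
    set y : Fin l → ℝ := fun j => v (Sum.inr j) with hy
    have hv' : v = Sum.elim x y := by funext s; cases s <;> rfl
    have hxy : x ≠ 0 ∨ y ≠ 0 := by
      by_contra h
      push_neg at h
      apply hv
      rw [hv', h.1, h.2]
      funext s; cases s <;> rfl
    rw [star_trivial, hv']
    have hform : Sum.elim x y ⬝ᵥ ((Matrix.fromBlocks
        ((1 / tau) • (1 : Matrix (Fin n) (Fin n) ℝ) - lam • (Aᵀ * A))
        (-(lam • (Aᵀ * B)))
        (-(lam • (Bᵀ * A)))
        ((1 / sigma) • (1 : Matrix (Fin l) (Fin l) ℝ) - lam • (Bᵀ * B))) *ᵥ Sum.elim x y)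
      = (1/tau) * (x ⬝ᵥ x) + (1/sigma) * (y ⬝ᵥ y)
        - lam * ((A *ᵥ x) ⬝ᵥ (A *ᵥ x) + 2 * ((A *ᵥ x) ⬝ᵥ (B *ᵥ y)) + (B *ᵥ y) ⬝ᵥ (B *ᵥ y)) := by
      rw [fromBlocks_mulVec, sumElim_dotProduct_sumElim]
      simp only [sub_mulVec, neg_mulVec, smul_mulVec, one_mulVec, ← mulVec_mulVec,
        dotProduct_add, dotProduct_sub, dotProduct_neg, dotProduct_smul, smul_eq_mul,
        Sum.elim_comp_inl, Sum.elim_comp_inr, dot_tr]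
      rw [dotProduct_comm (B *ᵥ y) (A *ᵥ x)]
      ring
    rw [hform]
    have hQ : 0 < (1/tau) * (x ⬝ᵥ x) + (1/sigma) * (y ⬝ᵥ y) := by
      have hX0 : 0 ≤ x ⬝ᵥ x := dp_self_nonneg x
      have hY0 : 0 ≤ y ⬝ᵥ y := dp_self_nonneg y
      have h1t : 0 < (1:ℝ)/tau := by positivity
      have h1s : 0 < (1:ℝ)/sigma := by positivity
      rcases hxy with h | h
      · have hXne : x ⬝ᵥ x ≠ 0 := fun h0 => h (dotProduct_self_eq_zero.mp h0)
        have hXpos : 0 < x ⬝ᵥ x := lt_of_le_of_ne hX0 (Ne.symm hXne)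
        nlinarith
      · have hYne : y ⬝ᵥ y ≠ 0 := fun h0 => h (dotProduct_self_eq_zero.mp h0)
        have hYpos : 0 < y ⬝ᵥ y := lt_of_le_of_ne hY0 (Ne.symm hYne)
        nlinarith
    exact arith_key lam tau sigma ‖Aᵀ * A‖ ‖Bᵀ * B‖ (x ⬝ᵥ x) (y ⬝ᵥ y) _ _ _
      hlam htau hsigma (norm_nonneg _) (norm_nonneg _) hcond
      (dp_self_nonneg x) (dp_self_nonneg y) (quad_le A x) (quad_le B y)
      (fun p q => cross_bound (A *ᵥ x) (B *ᵥ y) p q) hQ
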